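/- arXiv:2304.01160 — 2 statements merged into one kernel-verified Lean document; each statement's English description precedes it below -/
import Mathlib

section
/- Let Ω ⊆ ℝⁿ be open, let L : ℝⁿ × ℝᵐ × (m×n real matrices) → ℝ be smooth, and let φ : ℝᵐ → ℝᵐ be a smooth infinitesimal symmetry of L in the sense that for all (x, y, q), Σ_k (∂L/∂y^k)(x,y,q)·φ^k(y) + Σ_{k,j} (∂L/∂q^k_j)(x,y,q)·Σ_l (∂φ^k/∂y^l)(y)·q^l_j = 0. If u : Ω → ℝᵐ is smooth and satisfies the Euler–Lagrange equations, i.e. for each k and all x ∈ Ω, (∂L/∂y^k)(x, u(x), Du(x)) = Σ_j ∂/∂x^j [ (∂L/∂q^k_j)(x, u(x), Du(x)) ], then the vector field V on Ω with components V^j(x) = Σ_k (∂L/∂q^k_j)(x, u(x), Du(x))·φ^k(u(x)) is divergence free: Σ_j ∂V^j/∂x^j = 0 on Ω. -/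
/-- Partial derivative of a scalar function on `ℝⁿ` in the `j`-th coordinate direction. -/
noncomputable def pderiv' {n : ℕ} (j : Fin n) (f : (Fin n → ℝ) → ℝ) (x : Fin n → ℝ) : ℝ :=
  fderiv ℝ f x (Pi.single j 1)

open Filter Topology

noncomputable def Dmat {n m : ℕ} (u : (Fin n → ℝ) → (Fin m → ℝ)) (x : Fin n → ℝ) :
    Fin m → Fin n → ℝ :=
  fun k j => fderiv ℝ u x (Pi.single j 1) k

lemma contDiffOn_Dmat {n m : ℕ} {Ω : Set (Fin n → ℝ)} (hΩ : IsOpen Ω)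
    {u : (Fin n → ℝ) → (Fin m → ℝ)} (hu : ContDiffOn ℝ (⊤ : ℕ∞) u Ω) :
    ContDiffOn ℝ (⊤ : ℕ∞) (Dmat u) Ω := by
  have h1 : ContDiffOn ℝ (⊤ : ℕ∞) (fderiv ℝ u) Ω := hu.fderiv_of_isOpen hΩ (by simp)
  apply contDiffOn_pi.2; intro k
  apply contDiffOn_pi.2; intro j
  have h2 := ((ContinuousLinearMap.proj (R := ℝ) (φ := fun _ : Fin m => ℝ) k).contDiff.comp
    ((ContinuousLinearMap.apply ℝ (Fin m → ℝ) (Pi.single j (1:ℝ))).contDiff)).comp_contDiffOn h1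
  exact h2

/-- Noether's first theorem (first-order Lagrangian, vertical infinitesimal symmetry):
if `φ` is an infinitesimal symmetry of the Lagrangian density `L(x, y, q)` and `u` solves
the Euler–Lagrange equations on an open set `Ω`, then the Noether current
`V^j = Σ_k (∂L/∂q^k_j)(x, u, Du) φ^k(u)` is divergence free on `Ω`. -/
theorem noether_first_theorem
    {n m : ℕ}
    (Ω : Set (Fin n → ℝ)) (hΩ : IsOpen Ω)
    (L : ((Fin n → ℝ) × (Fin m → ℝ) × (Fin m → Fin n → ℝ)) → ℝ)
    (hL : ContDiff ℝ (⊤ : ℕ∞) L)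
    (φ : (Fin m → ℝ) → (Fin m → ℝ))
    (hφ : ContDiff ℝ (⊤ : ℕ∞) φ)
    -- `φ` is an infinitesimal symmetry of the Lagrangian density:
    -- Σ_k L_{y^k} φ^k + Σ_{k,j} L_{q^k_j} Σ_l (∂φ^k/∂y^l) q^l_j = 0 for all (x, y, q)
    (hsym : ∀ (x : Fin n → ℝ) (y : Fin m → ℝ) (q : Fin m → Fin n → ℝ),
      (∑ k : Fin m, fderiv ℝ L (x, y, q) (0, Pi.single k 1, 0) * φ y k) +
      (∑ k : Fin m, ∑ j : Fin n,
        fderiv ℝ L (x, y, q) (0, 0, Pi.single k (Pi.single j 1)) *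
          (∑ l : Fin m, fderiv ℝ φ y (Pi.single l 1) k * q l j)) = 0)
    (u : (Fin n → ℝ) → (Fin m → ℝ))
    (hu : ContDiffOn ℝ (⊤ : ℕ∞) u Ω)
    -- the Jacobian matrix `Du(x)`, with entries `(Du x) k j = ∂u^k/∂x^j`
    (Du : (Fin n → ℝ) → (Fin m → Fin n → ℝ))
    (hDu : ∀ x ∈ Ω, ∀ k j, Du x k j = fderiv ℝ u x (Pi.single j 1) k)
    -- Euler–Lagrange equations on Ω:
    -- L_{y^k}(x, u, Du) = Σ_j ∂/∂x^j [ L_{q^k_j}(x, u, Du) ]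
    (hEL : ∀ x ∈ Ω, ∀ k : Fin m,
      fderiv ℝ L (x, u x, Du x) (0, Pi.single k 1, 0) =
        ∑ j : Fin n, pderiv' j
          (fun x' => fderiv ℝ L (x', u x', Du x') (0, 0, Pi.single k (Pi.single j 1))) x)
    -- the Noether current V
    (V : (Fin n → ℝ) → (Fin n → ℝ))
    (hV : ∀ x ∈ Ω, ∀ j : Fin n, V x j =
      ∑ k : Fin m,
        fderiv ℝ L (x, u x, Du x) (0, 0, Pi.single k (Pi.single j 1)) * φ (u x) k) :
    ∀ x ∈ Ω, ∑ j : Fin n, pderiv' j (fun x' => V x' j) x = 0 := by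
  intro x hx
  classical
  have hmem : Ω ∈ 𝓝 x := hΩ.mem_nhds hx
  set D : (Fin n → ℝ) → (Fin m → Fin n → ℝ) := Dmat u with hD
  have hDeq : ∀ x' ∈ Ω, Du x' = D x' := by
    intro x' hx'; funext k j; exact hDu x' hx' k j
  -- the smooth map into the jet space
  have hw : ContDiffOn ℝ (⊤ : ℕ∞) (fun x' => ((x', u x', D x') :
      (Fin n → ℝ) × (Fin m → ℝ) × (Fin m → Fin n → ℝ))) Ω :=
    contDiffOn_id.prodMk (hu.prodMk (contDiffOn_Dmat hΩ hu))
  -- for each fixed direction ξ, x' ↦ ∂L(x',u x',D x') ξ is smooth on Ω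
  have hG : ∀ ξ : ((Fin n → ℝ) × (Fin m → ℝ) × (Fin m → Fin n → ℝ)), ContDiffOn ℝ (⊤ : ℕ∞)
      (fun x' => fderiv ℝ L (x', u x', D x') ξ) Ω := by
    intro ξ
    have h1 : ContDiff ℝ (⊤ : ℕ∞) (fderiv ℝ L) := hL.fderiv_right (by simp)
    exact ((ContinuousLinearMap.apply ℝ ℝ ξ).contDiff.comp h1).comp_contDiffOn hw
  have hGdiff : ∀ ξ, DifferentiableAt ℝ (fun x' => fderiv ℝ L (x', u x', D x') ξ) x :=
    fun ξ => ((hG ξ).contDiffAt hmem).differentiableAt (by simp)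
  have hud : DifferentiableAt ℝ u x := (hu.contDiffAt hmem).differentiableAt (by simp)
  have hφd : DifferentiableAt ℝ φ (u x) :=
    (hφ.differentiable (by simp)).differentiableAt
  -- derivative of the components of φ ∘ u
  have hcomp : ∀ k : Fin m, HasFDerivAt (fun x' => φ (u x') k)
      ((ContinuousLinearMap.proj k).comp ((fderiv ℝ φ (u x)).comp (fderiv ℝ u x))) x := by
    intro k
    have h1 : HasFDerivAt (fun x' => φ (u x')) ((fderiv ℝ φ (u x)).comp (fderiv ℝ u x)) x :=
      hφd.hasFDerivAt.comp x hud.hasFDerivAt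
    exact (ContinuousLinearMap.proj k).hasFDerivAt.comp x h1
  have hcompd : ∀ k : Fin m, DifferentiableAt ℝ (fun x' => φ (u x') k) x :=
    fun k => (hcomp k).differentiableAt
  -- expansion of the chain rule term
  have hexp : ∀ k : Fin m, ∀ j : Fin n,
      fderiv ℝ φ (u x) (fderiv ℝ u x (Pi.single j 1)) k
        = ∑ l : Fin m, fderiv ℝ φ (u x) (Pi.single l 1) k * D x l j := by
    intro k j
    set v : Fin m → ℝ := fderiv ℝ u x (Pi.single j 1) with hv
    have hvD : ∀ l, v l = D x l j := fun l => rfl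
    have hvsum : v = ∑ l : Fin m, v l • (Pi.single l 1 : Fin m → ℝ) := by
      funext i
      simp [Finset.sum_apply, Pi.single_apply]
    calc fderiv ℝ φ (u x) v k
        = fderiv ℝ φ (u x) (∑ l : Fin m, v l • (Pi.single l 1 : Fin m → ℝ)) k := by rw [← hvsum]
      _ = (∑ l : Fin m, v l • fderiv ℝ φ (u x) ((Pi.single l 1 : Fin m → ℝ))) k := by
          rw [map_sum]; simp
      _ = ∑ l : Fin m, fderiv ℝ φ (u x) (Pi.single l 1) k * D x l j := by
          simp [Finset.sum_apply, ← hvD, mul_comm]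
  -- rewrite the Noether current near x
  have hVF : ∀ j : Fin n, pderiv' j (fun x' => V x' j) x
      = pderiv' j (fun x' => ∑ k : Fin m,
          fderiv ℝ L (x', u x', D x') (0, 0, Pi.single k (Pi.single j 1)) * φ (u x') k) x := by
    intro j
    unfold pderiv'
    congr 1
    apply Filter.EventuallyEq.fderiv_eq
    filter_upwards [hmem] with x' hx'
    rw [hV x' hx' j, hDeq x' hx']
  -- rewrite the Euler–Lagrange pderiv's
  have hELD : ∀ k : Fin m,
      fderiv ℝ L (x, u x, D x) (0, Pi.single k 1, 0) =
        ∑ j : Fin n, pderiv' j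
          (fun x' => fderiv ℝ L (x', u x', D x') (0, 0, Pi.single k (Pi.single j 1))) x := by
    intro k
    rw [← hDeq x hx]
    rw [hEL x hx k]
    refine Finset.sum_congr rfl fun j _ => ?_
    unfold pderiv'
    congr 1
    apply Filter.EventuallyEq.fderiv_eq
    filter_upwards [hmem] with x' hx'
    rw [hDeq x' hx']
  -- compute the divergence of the (smooth version of) the Noether current
  have hFder : ∀ j : Fin n,
      pderiv' j (fun x' => ∑ k : Fin m,
          fderiv ℝ L (x', u x', D x') (0, 0, Pi.single k (Pi.single j 1)) * φ (u x') k) x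
      = ∑ k : Fin m,
          (fderiv ℝ L (x, u x, D x) (0, 0, Pi.single k (Pi.single j 1)) *
            (∑ l : Fin m, fderiv ℝ φ (u x) (Pi.single l 1) k * D x l j)
          + φ (u x) k * pderiv' j
              (fun x' => fderiv ℝ L (x', u x', D x') (0, 0, Pi.single k (Pi.single j 1))) x) := by
    intro j
    unfold pderiv'
    rw [fderiv_fun_sum (fun k _ => (hGdiff _).fun_mul (hcompd k))]
    rw [ContinuousLinearMap.sum_apply]
    refine Finset.sum_congr rfl fun k _ => ?_
    rw [fderiv_fun_mul (hGdiff _) (hcompd k)]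
    have hfd : fderiv ℝ (fun x' => φ (u x') k) x = (ContinuousLinearMap.proj k).comp
        ((fderiv ℝ φ (u x)).comp (fderiv ℝ u x)) := (hcomp k).fderiv
    rw [hfd]
    simp only [ContinuousLinearMap.add_apply, ContinuousLinearMap.smul_apply,
      ContinuousLinearMap.comp_apply, ContinuousLinearMap.proj_apply, smul_eq_mul]
    rw [hexp k j]
  -- assemble
  have h1 : ∑ j : Fin n, pderiv' j (fun x' => V x' j) x
      = (∑ k : Fin m, ∑ j : Fin n,
          fderiv ℝ L (x, u x, D x) (0, 0, Pi.single k (Pi.single j 1)) *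
            (∑ l : Fin m, fderiv ℝ φ (u x) (Pi.single l 1) k * D x l j))
        + ∑ k : Fin m, φ (u x) k *
            ∑ j : Fin n, pderiv' j
              (fun x' => fderiv ℝ L (x', u x', D x') (0, 0, Pi.single k (Pi.single j 1))) x := by
    rw [Finset.sum_congr rfl (fun j _ => (hVF j).trans (hFder j))]
    rw [Finset.sum_comm]
    rw [← Finset.sum_add_distrib]
    refine Finset.sum_congr rfl fun k _ => ?_
    rw [Finset.sum_add_distrib]
    congr 1
    rw [Finset.mul_sum]
  rw [h1]
  have h2 := hsym x (u x) (Du x)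
  rw [hDeq x hx] at h2
  have h3 : ∀ k : Fin m, φ (u x) k *
      ∑ j : Fin n, pderiv' j
        (fun x' => fderiv ℝ L (x', u x', D x') (0, 0, Pi.single k (Pi.single j 1))) x
      = fderiv ℝ L (x, u x, D x) (0, Pi.single k 1, 0) * φ (u x) k := by
    intro k; rw [← hELD k, mul_comm]
  rw [Finset.sum_congr rfl (fun k _ => h3 k)]
  linarith [h2]
end

section
/- Let E : H² → ℝ be a smooth function on the upper half-plane H² = {(x,y) ∈ ℝ² : y > 0} satisfying E_xx − E_y/y − E/y² = 0, E_xy + E_x/y = 0, and E_yy + E_y/y − E/y² = 0 on all of H². Then there exist real constants a, b, c such that E(x,y) = a·(x/y) + b·(1/y) + c·(x² + y²)/y for all (x,y) ∈ H². Hence the kernel of the operator ∇d + Rg on H² is exactly the 3-dimensional real span of k₀ = x/y, k₁ = 1/y, k₂ = (x² + y²)/y. -/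
/-- Partial derivative in the first coordinate direction on `ℝ²`. -/
noncomputable def pdx (f : (ℝ × ℝ) → ℝ) (z : ℝ × ℝ) : ℝ := fderiv ℝ f z (1, 0)

/-- Partial derivative in the second coordinate direction on `ℝ²`. -/
noncomputable def pdy (f : (ℝ × ℝ) → ℝ) (z : ℝ × ℝ) : ℝ := fderiv ℝ f z (0, 1)

/-- The upper half-plane `H² = {(x, y) : y > 0}`. -/
def UHP : Set (ℝ × ℝ) := {z : ℝ × ℝ | 0 < z.2}

lemma isOpen_UHP : IsOpen UHP := isOpen_lt continuous_const continuous_snd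

lemma convex_UHP : Convex ℝ UHP := convex_halfSpace_gt ⟨fun _ _ => rfl, fun _ _ => rfl⟩ 0

lemma pd_mul_v {f g : (ℝ × ℝ) → ℝ} {z : ℝ × ℝ}
    (hf : DifferentiableAt ℝ f z) (hg : DifferentiableAt ℝ g z) (v : ℝ × ℝ) :
    fderiv ℝ (fun w => f w * g w) z v = f z * fderiv ℝ g z v + g z * fderiv ℝ f z v := by
  rw [fderiv_fun_mul hf hg]
  simp [smul_eq_mul]

lemma pd_add_v {f g : (ℝ × ℝ) → ℝ} {z : ℝ × ℝ}
    (hf : DifferentiableAt ℝ f z) (hg : DifferentiableAt ℝ g z) (v : ℝ × ℝ) :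
    fderiv ℝ (fun w => f w + g w) z v = fderiv ℝ f z v + fderiv ℝ g z v := by
  rw [fderiv_fun_add hf hg]; rfl

lemma pd_sub_v {f g : (ℝ × ℝ) → ℝ} {z : ℝ × ℝ}
    (hf : DifferentiableAt ℝ f z) (hg : DifferentiableAt ℝ g z) (v : ℝ × ℝ) :
    fderiv ℝ (fun w => f w - g w) z v = fderiv ℝ f z v - fderiv ℝ g z v := by
  rw [fderiv_fun_sub hf hg]; rfl

lemma pd_fst_v (z v : ℝ × ℝ) : fderiv ℝ (fun w : ℝ × ℝ => w.1) z v = v.1 := by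
  rw [show (fun w : ℝ × ℝ => w.1) = Prod.fst from rfl, fderiv_fst]; rfl

lemma pd_snd_v (z v : ℝ × ℝ) : fderiv ℝ (fun w : ℝ × ℝ => w.2) z v = v.2 := by
  rw [show (fun w : ℝ × ℝ => w.2) = Prod.snd from rfl, fderiv_snd]; rfl

lemma pd_const_v (c : ℝ) (z v : ℝ × ℝ) : fderiv ℝ (fun _ : ℝ × ℝ => c) z v = 0 := by
  rw [fderiv_fun_const]; rfl

lemma pd_invsnd_v {z : ℝ × ℝ} (hz : z.2 ≠ 0) (v : ℝ × ℝ) :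
    fderiv ℝ (fun w : ℝ × ℝ => (w.2)⁻¹) z v = -(z.2 ^ 2)⁻¹ * v.2 := by
  have h := (hasFDerivAt_inv hz).comp z (hasFDerivAt_snd (p := z) (𝕜 := ℝ) (E := ℝ) (F := ℝ))
  rw [show (fun w : ℝ × ℝ => (w.2)⁻¹) = (fun x : ℝ => x⁻¹) ∘ Prod.snd from rfl, h.fderiv]
  simp [smul_eq_mul]
  ring

lemma fderiv_eq_zero_of_pd {f : (ℝ × ℝ) → ℝ} {z : ℝ × ℝ}
    (h1 : fderiv ℝ f z (1, 0) = 0) (h2 : fderiv ℝ f z (0, 1) = 0) :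
    fderiv ℝ f z = 0 := by
  refine ContinuousLinearMap.ext fun v => ?_
  have hv : v = v.1 • ((1 : ℝ), (0 : ℝ)) + v.2 • ((0 : ℝ), (1 : ℝ)) := by
    simp [Prod.ext_iff]
  conv_lhs => rw [hv]
  rw [map_add, map_smul, map_smul, h1, h2]
  simp

lemma const_of_pd_zero {f : (ℝ × ℝ) → ℝ} (hf : DifferentiableOn ℝ f UHP)
    (h1 : ∀ z ∈ UHP, fderiv ℝ f z (1, 0) = 0) (h2 : ∀ z ∈ UHP, fderiv ℝ f z (0, 1) = 0)
    {z w : ℝ × ℝ} (hz : z ∈ UHP) (hw : w ∈ UHP) : f z = f w := by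
  refine convex_UHP.is_const_of_fderivWithin_eq_zero hf (fun u hu => ?_) hz hw
  rw [fderivWithin_of_isOpen isOpen_UHP hu]
  exact fderiv_eq_zero_of_pd (h1 u hu) (h2 u hu)

/-- Any smooth function on the upper half-plane in the kernel of `∇d + Rg` for the
hyperbolic metric (`R = −1`), i.e. satisfying `E_xx − E_y/y − E/y² = 0`,
`E_xy + E_x/y = 0`, `E_yy + E_y/y − E/y² = 0`, is a real linear combination of
`k₀ = x/y`, `k₁ = 1/y`, `k₂ = (x² + y²)/y`; hence the kernel of `∇d + Rg` is exactly
the 3-dimensional real span of `k₀, k₁, k₂`. -/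
theorem kernel_nabla_d_Rg_is_span
    (E : (ℝ × ℝ) → ℝ)
    (hE : ContDiffOn ℝ (⊤ : ℕ∞) E UHP)
    (h11 : ∀ z ∈ UHP, pdx (fun w => pdx E w) z - pdy E z / z.2 - E z / z.2 ^ 2 = 0)
    (h12 : ∀ z ∈ UHP, pdx (fun w => pdy E w) z + pdx E z / z.2 = 0)
    (h22 : ∀ z ∈ UHP, pdy (fun w => pdy E w) z + pdy E z / z.2 - E z / z.2 ^ 2 = 0) :
    ∃ a b c : ℝ, ∀ z ∈ UHP,
      E z = a * (z.1 / z.2) + b * (1 / z.2) + c * ((z.1 ^ 2 + z.2 ^ 2) / z.2) := by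
  simp only [pdx, pdy] at h11 h12 h22
  have hO : IsOpen UHP := isOpen_UHP
  have hy : ∀ z ∈ UHP, (0 : ℝ) < z.2 := fun z hz => hz
  have hEd : ∀ z ∈ UHP, DifferentiableAt ℝ E z := fun z hz =>
    (hE.contDiffAt (hO.mem_nhds hz)).differentiableAt (by simp)
  have hfE : ContDiffOn ℝ (⊤ : ℕ∞) (fderiv ℝ E) UHP := hE.fderiv_of_isOpen hO (by norm_cast)
  have hfEd : ∀ z ∈ UHP, DifferentiableAt ℝ (fderiv ℝ E) z := fun z hz =>
    (hfE.contDiffAt (hO.mem_nhds hz)).differentiableAt (by simp)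
  have hExd : ∀ z ∈ UHP, DifferentiableAt ℝ (fun w => fderiv ℝ E w ((1 : ℝ), (0 : ℝ))) z :=
    fun z hz => (hfEd z hz).clm_apply (differentiableAt_const _)
  have hEyd : ∀ z ∈ UHP, DifferentiableAt ℝ (fun w => fderiv ℝ E w ((0 : ℝ), (1 : ℝ))) z :=
    fun z hz => (hfEd z hz).clm_apply (differentiableAt_const _)
  -- symmetry of second derivatives
  have hsymm : ∀ z ∈ UHP,
      fderiv ℝ (fun w => fderiv ℝ E w ((1 : ℝ), (0 : ℝ))) z ((0 : ℝ), (1 : ℝ))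
        = fderiv ℝ (fun w => fderiv ℝ E w ((0 : ℝ), (1 : ℝ))) z ((1 : ℝ), (0 : ℝ)) := by
    intro z hz
    have hev : ∀ᶠ w in nhds z, HasFDerivAt E (fderiv ℝ E w) w := by
      filter_upwards [hO.mem_nhds hz] with w hw
      exact (hEd w hw).hasFDerivAt
    have hsym := second_derivative_symmetric_of_eventually hev (hfEd z hz).hasFDerivAt
    have key : ∀ u v : ℝ × ℝ, fderiv ℝ (fun w => fderiv ℝ E w v) z u
        = fderiv ℝ (fderiv ℝ E) z u v := by
      intro u v
      rw [fderiv_clm_apply (hfEd z hz) (differentiableAt_const v)]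
      simp
    rw [key, key]
    exact hsym _ _
  -- values of second partials
  have e11 : ∀ z ∈ UHP, fderiv ℝ (fun w => fderiv ℝ E w ((1 : ℝ), (0 : ℝ))) z ((1 : ℝ), (0 : ℝ))
      = fderiv ℝ E z ((0 : ℝ), (1 : ℝ)) / z.2 + E z / z.2 ^ 2 :=
    fun z hz => by linarith [h11 z hz]
  have e12x : ∀ z ∈ UHP, fderiv ℝ (fun w => fderiv ℝ E w ((0 : ℝ), (1 : ℝ))) z ((1 : ℝ), (0 : ℝ))
      = -(fderiv ℝ E z ((1 : ℝ), (0 : ℝ)) / z.2) :=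
    fun z hz => by linarith [h12 z hz]
  have e12y : ∀ z ∈ UHP, fderiv ℝ (fun w => fderiv ℝ E w ((1 : ℝ), (0 : ℝ))) z ((0 : ℝ), (1 : ℝ))
      = -(fderiv ℝ E z ((1 : ℝ), (0 : ℝ)) / z.2) :=
    fun z hz => (hsymm z hz).trans (e12x z hz)
  have e22 : ∀ z ∈ UHP, fderiv ℝ (fun w => fderiv ℝ E w ((0 : ℝ), (1 : ℝ))) z ((0 : ℝ), (1 : ℝ))
      = -(fderiv ℝ E z ((0 : ℝ), (1 : ℝ)) / z.2) + E z / z.2 ^ 2 :=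
    fun z hz => by linarith [h22 z hz]
  -- the auxiliary functions P = y E_x, Q = E + y E_y
  set P : (ℝ × ℝ) → ℝ := fun w => w.2 * fderiv ℝ E w ((1 : ℝ), (0 : ℝ)) with hPdef
  set Q : (ℝ × ℝ) → ℝ := fun w => E w + w.2 * fderiv ℝ E w ((0 : ℝ), (1 : ℝ)) with hQdef
  have hPd : ∀ z ∈ UHP, DifferentiableAt ℝ P z := fun z hz =>
    differentiableAt_snd.mul (hExd z hz)
  have hQd : ∀ z ∈ UHP, DifferentiableAt ℝ Q z := fun z hz =>
    (hEd z hz).add (differentiableAt_snd.mul (hEyd z hz))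
  have hPx : ∀ z ∈ UHP, fderiv ℝ P z ((1 : ℝ), (0 : ℝ)) = Q z / z.2 := by
    intro z hz
    have hyz := (hy z hz).ne'
    rw [hPdef, pd_mul_v differentiableAt_snd (hExd z hz), pd_snd_v, e11 z hz]
    simp only [hQdef]
    field_simp
    ring
  have hPy : ∀ z ∈ UHP, fderiv ℝ P z ((0 : ℝ), (1 : ℝ)) = 0 := by
    intro z hz
    have hyz := (hy z hz).ne'
    rw [hPdef, pd_mul_v differentiableAt_snd (hExd z hz), pd_snd_v, e12y z hz]
    field_simp
    ring
  have hQx : ∀ z ∈ UHP, fderiv ℝ Q z ((1 : ℝ), (0 : ℝ)) = 0 := by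
    intro z hz
    have hyz := (hy z hz).ne'
    rw [hQdef, pd_add_v (hEd z hz) (differentiableAt_snd.fun_mul (hEyd z hz)),
      pd_mul_v differentiableAt_snd (hEyd z hz), pd_snd_v, e12x z hz]
    field_simp
    ring
  have hQy : ∀ z ∈ UHP, fderiv ℝ Q z ((0 : ℝ), (1 : ℝ)) = Q z / z.2 := by
    intro z hz
    have hyz := (hy z hz).ne'
    rw [hQdef, pd_add_v (hEd z hz) (differentiableAt_snd.fun_mul (hEyd z hz)),
      pd_mul_v differentiableAt_snd (hEyd z hz), pd_snd_v, e22 z hz]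
    simp only [hQdef]
    field_simp
    ring
  -- base point
  have hz₀ : ((0 : ℝ), (1 : ℝ)) ∈ UHP := by
    show (0 : ℝ) < 1; norm_num
  set k : ℝ := Q ((0 : ℝ), (1 : ℝ)) with hkdef
  set a : ℝ := P ((0 : ℝ), (1 : ℝ)) with hadef
  -- Q z / z.2 is constant
  have hQval : ∀ z ∈ UHP, Q z = k * z.2 := by
    have hc : ∀ z ∈ UHP, Q z * (z.2)⁻¹ = k := by
      intro z hz
      have := const_of_pd_zero (f := fun w => Q w * (w.2)⁻¹)
        (fun w hw => ((hQd w hw).mul (differentiableAt_snd.inv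
          (hy w hw).ne')).differentiableWithinAt)
        (fun w hw => by
          rw [pd_mul_v (hQd w hw) (differentiableAt_snd.fun_inv (hy w hw).ne'),
            pd_invsnd_v (hy w hw).ne', hQx w hw]
          simp)
        (fun w hw => by
          have hyw := (hy w hw).ne'
          rw [pd_mul_v (hQd w hw) (differentiableAt_snd.fun_inv (hy w hw).ne'),
            pd_invsnd_v (hy w hw).ne', hQy w hw]
          field_simp
          ring)
        hz hz₀
      simpa using this
    intro z hz
    have hyz := (hy z hz).ne'
    have := hc z hz
    field_simp at this
    linarith [this]
  -- P z = k * z.1 + a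
  have hPval : ∀ z ∈ UHP, P z = k * z.1 + a := by
    intro z hz
    have := const_of_pd_zero (f := fun w => P w - k * w.1)
      (fun w hw => ((hPd w hw).sub
        ((differentiableAt_const k).mul differentiableAt_fst)).differentiableWithinAt)
      (fun w hw => by
        have hyw := (hy w hw).ne'
        rw [pd_sub_v (hPd w hw) ((differentiableAt_const k).fun_mul differentiableAt_fst),
          pd_mul_v (differentiableAt_const k) differentiableAt_fst, pd_fst_v, pd_const_v,
          hPx w hw, hQval w hw]
        field_simp; simp)
      (fun w hw => by
        rw [pd_sub_v (hPd w hw) ((differentiableAt_const k).fun_mul differentiableAt_fst),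
          pd_mul_v (differentiableAt_const k) differentiableAt_fst, pd_fst_v, pd_const_v,
          hPy w hw]
        simp)
      hz hz₀
    simp only at this
    rw [hadef]
    linarith [this]
  -- the function G = y E equals k/2 x² + a x + k/2 y² + b
  refine ⟨a, E ((0 : ℝ), (1 : ℝ)) - k / 2, k / 2, ?_⟩
  intro z hz
  have hyz := (hy z hz).ne'
  have hGd : ∀ w ∈ UHP, DifferentiableAt ℝ (fun u => u.2 * E u) w := fun w hw =>
    differentiableAt_snd.mul (hEd w hw)
  have hpoly_d : ∀ w : ℝ × ℝ, DifferentiableAt ℝ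
      (fun u : ℝ × ℝ => k / 2 * (u.1 * u.1) + a * u.1 + k / 2 * (u.2 * u.2)) w := by
    intro w
    exact (((differentiableAt_const _).mul (differentiableAt_fst.mul differentiableAt_fst)).add
      ((differentiableAt_const _).mul differentiableAt_fst)).add
      ((differentiableAt_const _).mul (differentiableAt_snd.mul differentiableAt_snd))
  have hGx : ∀ w ∈ UHP, fderiv ℝ (fun u => u.2 * E u) w ((1 : ℝ), (0 : ℝ)) = P w := by
    intro w hw
    rw [pd_mul_v differentiableAt_snd (hEd w hw), pd_snd_v]
    simp [hPdef]
  have hGy : ∀ w ∈ UHP, fderiv ℝ (fun u => u.2 * E u) w ((0 : ℝ), (1 : ℝ)) = Q w := by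
    intro w hw
    rw [pd_mul_v differentiableAt_snd (hEd w hw), pd_snd_v]
    simp [hQdef]
    ring
  have hpoly_x : ∀ w : ℝ × ℝ, fderiv ℝ
      (fun u : ℝ × ℝ => k / 2 * (u.1 * u.1) + a * u.1 + k / 2 * (u.2 * u.2)) w ((1 : ℝ), (0 : ℝ))
      = k * w.1 + a := by
    intro w
    rw [pd_add_v (((differentiableAt_const _).fun_mul
        (differentiableAt_fst.fun_mul differentiableAt_fst)).fun_add
        ((differentiableAt_const _).fun_mul differentiableAt_fst))
        ((differentiableAt_const _).fun_mul (differentiableAt_snd.fun_mul differentiableAt_snd)),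
      pd_add_v ((differentiableAt_const _).fun_mul (differentiableAt_fst.fun_mul differentiableAt_fst))
        ((differentiableAt_const _).fun_mul differentiableAt_fst),
      pd_mul_v (differentiableAt_const _) (differentiableAt_fst.fun_mul differentiableAt_fst),
      pd_mul_v (differentiableAt_const _) differentiableAt_fst,
      pd_mul_v (differentiableAt_const _) (differentiableAt_snd.fun_mul differentiableAt_snd),
      pd_mul_v differentiableAt_fst differentiableAt_fst,
      pd_mul_v differentiableAt_snd differentiableAt_snd,
      pd_fst_v, pd_snd_v]
    simp [pd_const_v]
    ring
  have hpoly_y : ∀ w : ℝ × ℝ, fderiv ℝ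
      (fun u : ℝ × ℝ => k / 2 * (u.1 * u.1) + a * u.1 + k / 2 * (u.2 * u.2)) w ((0 : ℝ), (1 : ℝ))
      = k * w.2 := by
    intro w
    rw [pd_add_v (((differentiableAt_const _).fun_mul
        (differentiableAt_fst.fun_mul differentiableAt_fst)).fun_add
        ((differentiableAt_const _).fun_mul differentiableAt_fst))
        ((differentiableAt_const _).fun_mul (differentiableAt_snd.fun_mul differentiableAt_snd)),
      pd_add_v ((differentiableAt_const _).fun_mul (differentiableAt_fst.fun_mul differentiableAt_fst))
        ((differentiableAt_const _).fun_mul differentiableAt_fst),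
      pd_mul_v (differentiableAt_const _) (differentiableAt_fst.fun_mul differentiableAt_fst),
      pd_mul_v (differentiableAt_const _) differentiableAt_fst,
      pd_mul_v (differentiableAt_const _) (differentiableAt_snd.fun_mul differentiableAt_snd),
      pd_mul_v differentiableAt_fst differentiableAt_fst,
      pd_mul_v differentiableAt_snd differentiableAt_snd,
      pd_fst_v, pd_snd_v]
    simp [pd_const_v]
    ring
  have hT := const_of_pd_zero
    (f := fun u => u.2 * E u - (k / 2 * (u.1 * u.1) + a * u.1 + k / 2 * (u.2 * u.2)))
    (fun w hw => ((hGd w hw).sub (hpoly_d w)).differentiableWithinAt)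
    (fun w hw => by
      rw [pd_sub_v (hGd w hw) (hpoly_d w), hGx w hw, hpoly_x w, hPval w hw]
      ring)
    (fun w hw => by
      rw [pd_sub_v (hGd w hw) (hpoly_d w), hGy w hw, hpoly_y w, hQval w hw]
      ring)
    hz hz₀
  simp only at hT
  norm_num at hT
  -- hT : z.2 * E z - (...) = E (0,1) - k/2
  have h2 : E z = (E ((0 : ℝ), (1 : ℝ)) - k / 2
      + (k / 2 * (z.1 * z.1) + a * z.1 + k / 2 * (z.2 * z.2))) / z.2 := by
    rw [eq_div_iff hyz]
    linarith [hT]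
  rw [h2]
  field_simp
  ring
end
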